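/- Fluid scaling in the moderate gap regime: suppose Δ^T ≥ 0 is monotone decreasing in T, f satisfies Assumption 2, and Δ^T √T / f(T) → θ as T → ∞ for some constant θ ≥ 0. Let (n⋆_{1,T}, n⋆_{2,T}) be the unique positive solution of the fluid system, and let λ⋆ ∈ (0,1] be the unique solution of √(1 + 1/λ⋆) − √(1 + λ⋆) = θ. Then n⋆_{2,T} / (λ⋆ T/(1+λ⋆)) → 1, n⋆_{1,T} / (T/(1+λ⋆)) → 1, and n⋆_{2,T}/n⋆_{1,T} → λ⋆ as T → ∞. -/

import Mathlib

open MeasureTheory Filter Real Topology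

noncomputable section

/-- Assumption 2: properties of the exploration function. `f` is positive and monotone
increasing with `f(t) = ω(√(log log t))`, and there exists `0 ≤ β < 1/2` such that
`f(t)/t^β` is decreasing (on `t ≥ 1`). -/
def ExplorationFunction (f : ℕ → ℝ) : Prop :=
  (∀ t, 0 < f t) ∧ Monotone f ∧
    Tendsto (fun t : ℕ => f t / Real.sqrt (Real.log (Real.log t))) atTop atTop ∧
    ∃ β : ℝ, 0 ≤ β ∧ β < 1 / 2 ∧
      AntitoneOn (fun t : ℕ => f t / (t : ℝ) ^ β) (Set.Ici 1)

/-- The fluid system for gap sequence `Δ`, exploration function `f` and candidate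
solutions `n1 = n⋆_{1,·}`, `n2 = n⋆_{2,·}` : for all `T ≥ 1`, `n1 T ≥ n2 T > 0`,
`(n2 T)^{-1/2} − (n1 T)^{-1/2} = Δ T / f T` and `n1 T + n2 T = T`. -/
def FluidSolution (Δ f n1 n2 : ℕ → ℝ) : Prop :=
  ∀ T, 1 ≤ T → 0 < n2 T ∧ n2 T ≤ n1 T ∧
    1 / Real.sqrt (n2 T) - 1 / Real.sqrt (n1 T) = Δ T / f T ∧ n1 T + n2 T = (T : ℝ)

/-- The auxiliary function `g(x) = x^{-1/2} - (1-x)^{-1/2}`. -/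
def gfun (x : ℝ) : ℝ := 1 / Real.sqrt x - 1 / Real.sqrt (1 - x)

lemma gfun_strictAntiOn : StrictAntiOn gfun (Set.Ioc 0 (1/2 : ℝ)) := by
  intro x hx y hy hxy
  obtain ⟨hx0, hx2⟩ := hx
  obtain ⟨hy0, hy2⟩ := hy
  have h1 : Real.sqrt x < Real.sqrt y := Real.sqrt_lt_sqrt hx0.le hxy
  have hsx : 0 < Real.sqrt x := Real.sqrt_pos.2 hx0
  have h2 : 1 / Real.sqrt y < 1 / Real.sqrt x := one_div_lt_one_div_of_lt hsx h1
  have h3 : Real.sqrt (1 - y) ≤ Real.sqrt (1 - x) := Real.sqrt_le_sqrt (by linarith)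
  have h4 : 0 < Real.sqrt (1 - y) := Real.sqrt_pos.2 (by linarith)
  have h5 : 1 / Real.sqrt (1 - x) ≤ 1 / Real.sqrt (1 - y) := one_div_le_one_div_of_le h4 h3
  unfold gfun; linarith

lemma gfun_lam (lam θ : ℝ) (hlam0 : 0 < lam)
    (hlam : Real.sqrt (1 + 1 / lam) - Real.sqrt (1 + lam) = θ) :
    gfun (lam / (1 + lam)) = θ := by
  have hlp : 0 < 1 + lam := by linarith
  have e1 : (1:ℝ) / Real.sqrt (lam / (1 + lam)) = Real.sqrt (1 + 1/lam) := by
    rw [show lam / (1+lam) = (1 + 1/lam)⁻¹ by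
      rw [show (1:ℝ) + 1/lam = (1+lam)/lam by field_simp; ring, inv_div],
      Real.sqrt_inv, one_div, inv_inv]
  have e2 : (1:ℝ) / Real.sqrt (1 - lam / (1 + lam)) = Real.sqrt (1 + lam) := by
    rw [show 1 - lam / (1+lam) = (1+lam)⁻¹ by field_simp; ring, Real.sqrt_inv, one_div, inv_inv]
  unfold gfun
  rw [e1, e2, hlam]

/-- **Fluid scaling in the moderate gap regime.** If `Δ^T ≥ 0` is monotone decreasing,
`f` satisfies Assumption 2, and `Δ^T √T / f(T) → θ` for some `θ ≥ 0`, and `λ⋆ ∈ (0,1]`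
solves `√(1 + 1/λ⋆) − √(1 + λ⋆) = θ`, then the unique positive solution
`(n⋆_{1,T}, n⋆_{2,T})` of the fluid system satisfies `n⋆_{2,T}/(λ⋆T/(1+λ⋆)) → 1`,
`n⋆_{1,T}/(T/(1+λ⋆)) → 1` and `n⋆_{2,T}/n⋆_{1,T} → λ⋆`. -/
theorem fluid_scaling_moderate_gap (Δ f n1 n2 : ℕ → ℝ) (θ lam : ℝ)
    (hΔ0 : ∀ T, 0 ≤ Δ T) (hΔanti : Antitone Δ)
    (hf : ExplorationFunction f)
    (hθ : 0 ≤ θ)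
    (hmoderate : Tendsto (fun T : ℕ => Δ T * Real.sqrt T / f T) atTop (𝓝 θ))
    (hlam0 : 0 < lam) (hlam1 : lam ≤ 1)
    (hlam : Real.sqrt (1 + 1 / lam) - Real.sqrt (1 + lam) = θ)
    (hfluid : FluidSolution Δ f n1 n2) :
    Tendsto (fun T : ℕ => n2 T / (lam * (T : ℝ) / (1 + lam))) atTop (𝓝 1) ∧
      Tendsto (fun T : ℕ => n1 T / ((T : ℝ) / (1 + lam))) atTop (𝓝 1) ∧
      Tendsto (fun T : ℕ => n2 T / n1 T) atTop (𝓝 lam) := by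
  have hlp : 0 < 1 + lam := by linarith
  set rstar : ℝ := lam / (1 + lam) with hrstar
  have hrs_pos : 0 < rstar := div_pos hlam0 hlp
  have hrs_le : rstar ≤ 1/2 := by
    rw [hrstar, div_le_div_iff₀ hlp (by norm_num)]; linarith
  have hrs_mem : rstar ∈ Set.Ioc (0:ℝ) (1/2) := ⟨hrs_pos, hrs_le⟩
  have h1rs : 1 - rstar = 1/(1+lam) := by rw [hrstar]; field_simp; ring
  have hgstar : gfun rstar = θ := gfun_lam lam θ hlam0 hlam
  -- basic facts about r T := n2 T / T
  have hbase : ∀ T : ℕ, 1 ≤ T → 0 < n2 T / T ∧ n2 T / T ≤ 1/2 ∧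
      gfun (n2 T / T) = Δ T * Real.sqrt T / f T := by
    intro T hT
    obtain ⟨h2pos, h21, heq, hsum⟩ := hfluid T hT
    have hT0 : (0:ℝ) < T := by exact_mod_cast Nat.lt_of_lt_of_le Nat.zero_lt_one hT
    have h1pos : 0 < n1 T := lt_of_lt_of_le h2pos h21
    refine ⟨div_pos h2pos hT0, ?_, ?_⟩
    · rw [div_le_iff₀ hT0]; linarith
    · have hone : 1 - n2 T / T = n1 T / T := by
        field_simp; linarith
      unfold gfun
      rw [hone, Real.sqrt_div h2pos.le, Real.sqrt_div h1pos.le, one_div_div, one_div_div]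
      have hre : Real.sqrt T / Real.sqrt (n2 T) - Real.sqrt T / Real.sqrt (n1 T)
          = Real.sqrt T * (1 / Real.sqrt (n2 T) - 1 / Real.sqrt (n1 T)) := by ring
      rw [hre, heq]; ring
  have hgr : Tendsto (fun T : ℕ => gfun (n2 T / T)) atTop (𝓝 θ) := by
    refine hmoderate.congr' ?_
    filter_upwards [eventually_ge_atTop 1] with T hT
    exact ((hbase T hT).2.2).symm
  -- the key convergence: n2 T / T → rstar
  have hrt : Tendsto (fun T : ℕ => n2 T / T) atTop (𝓝 rstar) := by
    rw [tendsto_order]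
    constructor
    · intro a ha
      rcases le_or_gt a 0 with h | h
      · filter_upwards [eventually_ge_atTop 1] with T hT
        exact lt_of_le_of_lt h (hbase T hT).1
      · have hamem : a ∈ Set.Ioc (0:ℝ) (1/2) := ⟨h, ha.le.trans hrs_le⟩
        have hga : θ < gfun a := by
          have := gfun_strictAntiOn hamem hrs_mem ha
          rwa [hgstar] at this
        filter_upwards [hgr.eventually (eventually_lt_nhds hga), eventually_ge_atTop 1]
          with T h1 h2
        by_contra hc
        push_neg at hc
        have := gfun_strictAntiOn.antitoneOn ⟨(hbase T h2).1, (hbase T h2).2.1⟩ hamem hc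
        linarith
    · intro b hb
      rcases lt_or_ge (1/2 : ℝ) b with h | h
      · filter_upwards [eventually_ge_atTop 1] with T hT
        exact lt_of_le_of_lt (hbase T hT).2.1 h
      · have hbmem : b ∈ Set.Ioc (0:ℝ) (1/2) := ⟨hrs_pos.trans hb, h⟩
        have hgb : gfun b < θ := by
          have := gfun_strictAntiOn hrs_mem hbmem hb
          rwa [hgstar] at this
        filter_upwards [hgr.eventually (eventually_gt_nhds hgb), eventually_ge_atTop 1]
          with T h1 h2
        by_contra hc
        push_neg at hc
        have := gfun_strictAntiOn.antitoneOn hbmem ⟨(hbase T h2).1, (hbase T h2).2.1⟩ hc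
        linarith
  have hone_sub : Tendsto (fun T : ℕ => 1 - n2 T / T) atTop (𝓝 (1 - rstar)) :=
    tendsto_const_nhds.sub hrt
  refine ⟨?_, ?_, ?_⟩
  · have h := hrt.div_const rstar
    rw [div_self hrs_pos.ne'] at h
    refine h.congr' ?_
    filter_upwards [eventually_ge_atTop 1] with T hT
    have hT0 : (0:ℝ) < T := by exact_mod_cast Nat.lt_of_lt_of_le Nat.zero_lt_one hT
    rw [div_div, hrstar]
    congr 1
    ring
  · have h := hone_sub.mul_const (1 + lam)
    rw [show (1 - rstar) * (1 + lam) = 1 by rw [h1rs]; field_simp] at h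
    refine h.congr' ?_
    filter_upwards [eventually_ge_atTop 1] with T hT
    have hT0 : (0:ℝ) < T := by exact_mod_cast Nat.lt_of_lt_of_le Nat.zero_lt_one hT
    obtain ⟨h2pos, h21, heq, hsum⟩ := hfluid T hT
    have hn1 : n1 T = (T : ℝ) - n2 T := by linarith
    rw [hn1]
    field_simp
  · have h1rs0 : (1 - rstar) ≠ 0 := by rw [h1rs]; positivity
    have h := hrt.div hone_sub h1rs0
    rw [show rstar / (1 - rstar) = lam by rw [h1rs, hrstar]; field_simp] at h
    refine h.congr' ?_
    filter_upwards [eventually_ge_atTop 1] with T hT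
    have hT0 : (0:ℝ) < T := by exact_mod_cast Nat.lt_of_lt_of_le Nat.zero_lt_one hT
    obtain ⟨h2pos, h21, heq, hsum⟩ := hfluid T hT
    have h1pos : 0 < n1 T := lt_of_lt_of_le h2pos h21
    have hone : 1 - n2 T / T = n1 T / T := by field_simp; linarith
    simp only [Pi.div_apply]
    rw [hone]
    rw [div_div_div_cancel_right₀ hT0.ne' (n2 T) (n1 T)]
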